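/- (Monotonicity of the endpoint masses of the quantized Gaussian in the input.) The map x ↦ P_x(k−1) is monotone nondecreasing on ℝ, and the map x ↦ P_x(0) is monotone nonincreasing on ℝ: for all reals x ≤ x', P_x(k−1) ≤ P_{x'}(k−1) and P_x(0) ≥ P_{x'}(0). -/

import Mathlib

open MeasureTheory Real

/-- Density of the normal distribution `N(x, σ²)`. -/
noncomputable def gpdf (σ x t : ℝ) : ℝ :=
  (1 / (σ * Real.sqrt (2 * Real.pi))) * Real.exp (-(t - x) ^ 2 / (2 * σ ^ 2))

/-- Quantization levels `B(r) = -C_q + r · δ`, with `δ = 2·C_q/(k-1)`. -/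
noncomputable def Blev (Cq : ℝ) (k : ℕ) (r : ℕ) : ℝ :=
  -Cq + (r : ℝ) * (2 * Cq / ((k : ℝ) - 1))

/-- The quantized-Gaussian pmf `P_x(r)` on `{0, 1, …, k-1}`. -/
noncomputable def qgPmf (Cq σ : ℝ) (k : ℕ) (x : ℝ) (r : ℕ) : ℝ :=
  if r = 0 then
    (∫ t in Set.Iic (Blev Cq k 0), gpdf σ x t)
      + ∫ t in (Blev Cq k 0)..(Blev Cq k 1),
          gpdf σ x t * (Blev Cq k 1 - t) / (2 * Cq / ((k : ℝ) - 1))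
  else if r = k - 1 then
    (∫ t in (Blev Cq k (k - 2))..(Blev Cq k (k - 1)),
        gpdf σ x t * (t - Blev Cq k (k - 2)) / (2 * Cq / ((k : ℝ) - 1)))
      + ∫ t in Set.Ici (Blev Cq k (k - 1)), gpdf σ x t
  else
    (∫ t in (Blev Cq k (r - 1))..(Blev Cq k r),
        gpdf σ x t * (t - Blev Cq k (r - 1)) / (2 * Cq / ((k : ℝ) - 1)))
      + ∫ t in (Blev Cq k r)..(Blev Cq k (r + 1)),
          gpdf σ x t * (Blev Cq k (r + 1) - t) / (2 * Cq / ((k : ℝ) - 1))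

/-- The nondecreasing ramp weight. -/
noncomputable def wfun (a b t : ℝ) : ℝ := min 1 (max 0 ((t - a) / (b - a)))

/-- The nonincreasing ramp weight. -/
noncomputable def vfun (a b t : ℝ) : ℝ := min 1 (max 0 ((b - t) / (b - a)))

lemma gpdf_nonneg (σ x t : ℝ) (hσ : 0 < σ) : 0 ≤ gpdf σ x t := by
  unfold gpdf
  positivity

lemma gpdf_shift (σ x t : ℝ) : gpdf σ x t = gpdf σ 0 (t - x) := by
  simp [gpdf]

lemma gpdf_continuous (σ x : ℝ) : Continuous (gpdf σ x) := by
  unfold gpdf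
  fun_prop

lemma gpdf_integrable (σ x : ℝ) (hσ : 0 < σ) : Integrable (gpdf σ x) := by
  have hb : (0:ℝ) < 1 / (2 * σ ^ 2) := by positivity
  have h1 : Integrable (fun t : ℝ => Real.exp (-(1 / (2 * σ ^ 2)) * t ^ 2)) :=
    integrable_exp_neg_mul_sq hb
  have h2 := (h1.comp_sub_right x).const_mul (1 / (σ * Real.sqrt (2 * Real.pi)))
  refine h2.congr (Filter.Eventually.of_forall fun t => ?_)
  unfold gpdf
  ring_nf

lemma wfun_continuous (a b : ℝ) : Continuous (wfun a b) := by
  unfold wfun; fun_prop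

lemma vfun_continuous (a b : ℝ) : Continuous (vfun a b) := by
  unfold vfun; fun_prop

lemma wfun_mono (a b : ℝ) (hab : a < b) : Monotone (wfun a b) := by
  intro s t hst
  unfold wfun
  exact min_le_min le_rfl (max_le_max le_rfl (div_le_div_of_nonneg_right (by linarith) (by linarith)))

lemma vfun_anti (a b : ℝ) (hab : a < b) : Antitone (vfun a b) := by
  intro s t hst
  unfold vfun
  exact min_le_min le_rfl (max_le_max le_rfl (div_le_div_of_nonneg_right (by linarith) (by linarith)))

lemma wfun_bdd (a b t : ℝ) : ‖wfun a b t‖ ≤ 1 := by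
  rw [Real.norm_eq_abs, abs_le]
  constructor
  · have : (0:ℝ) ≤ max 0 ((t - a) / (b - a)) := le_max_left _ _
    unfold wfun
    have := le_min (by norm_num : (-1:ℝ) ≤ 1) (by linarith : (-1:ℝ) ≤ max 0 ((t - a) / (b - a)))
    exact this
  · exact min_le_left _ _

lemma vfun_bdd (a b t : ℝ) : ‖vfun a b t‖ ≤ 1 := by
  rw [Real.norm_eq_abs, abs_le]
  refine ⟨le_min (by norm_num) (le_trans (by norm_num) (le_max_left _ _)), min_le_left _ _⟩

lemma prod_integrable (σ x : ℝ) (hσ : 0 < σ) (w : ℝ → ℝ) (hw : Continuous w)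
    (hwb : ∀ t, ‖w t‖ ≤ 1) : Integrable (fun t => gpdf σ x t * w t) := by
  have := (gpdf_integrable σ x hσ).bdd_mul hw.aestronglyMeasurable (c := 1) (Filter.Eventually.of_forall hwb)
  exact this.congr (Filter.Eventually.of_forall fun t => mul_comm _ _)

/-- Translation identity. -/
lemma integral_gpdf_mul (σ x : ℝ) (w : ℝ → ℝ) :
    ∫ t, gpdf σ x t * w t = ∫ u, gpdf σ 0 u * w (u + x) := by
  have : ∀ t : ℝ, gpdf σ x t * w t = (fun u => gpdf σ 0 u * w (u + x)) (t - x) := by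
    intro t
    simp [gpdf_shift σ x t]
  simp_rw [this]
  exact integral_sub_right_eq_self (fun u => gpdf σ 0 u * w (u + x)) x

lemma mono_core (σ : ℝ) (hσ : 0 < σ) (w : ℝ → ℝ) (hw : Continuous w)
    (hwb : ∀ t, ‖w t‖ ≤ 1) (hwm : Monotone w) (x x' : ℝ) (hxx' : x ≤ x') :
    ∫ t, gpdf σ x t * w t ≤ ∫ t, gpdf σ x' t * w t := by
  rw [integral_gpdf_mul σ x w, integral_gpdf_mul σ x' w]
  have h1 : Integrable (fun u => gpdf σ 0 u * w (u + x)) :=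
    prod_integrable σ 0 hσ _ (hw.comp (by fun_prop)) (fun t => hwb _)
  have h2 : Integrable (fun u => gpdf σ 0 u * w (u + x')) :=
    prod_integrable σ 0 hσ _ (hw.comp (by fun_prop)) (fun t => hwb _)
  refine integral_mono h1 h2 fun u => ?_
  exact mul_le_mul_of_nonneg_left (hwm (by linarith)) (gpdf_nonneg σ 0 u hσ)

lemma anti_core (σ : ℝ) (hσ : 0 < σ) (w : ℝ → ℝ) (hw : Continuous w)
    (hwb : ∀ t, ‖w t‖ ≤ 1) (hwm : Antitone w) (x x' : ℝ) (hxx' : x ≤ x') :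
    ∫ t, gpdf σ x' t * w t ≤ ∫ t, gpdf σ x t * w t := by
  rw [integral_gpdf_mul σ x w, integral_gpdf_mul σ x' w]
  have h1 : Integrable (fun u => gpdf σ 0 u * w (u + x)) :=
    prod_integrable σ 0 hσ _ (hw.comp (by fun_prop)) (fun t => hwb _)
  have h2 : Integrable (fun u => gpdf σ 0 u * w (u + x')) :=
    prod_integrable σ 0 hσ _ (hw.comp (by fun_prop)) (fun t => hwb _)
  refine integral_mono h2 h1 fun u => ?_
  exact mul_le_mul_of_nonneg_left (hwm (by linarith)) (gpdf_nonneg σ 0 u hσ)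

/-- Representation of the top endpoint mass. -/
lemma repr_top (σ x a b : ℝ) (hσ : 0 < σ) (hab : a < b) :
    (∫ t in a..b, gpdf σ x t * (t - a) / (b - a)) + ∫ t in Set.Ici b, gpdf σ x t
      = ∫ t, gpdf σ x t * wfun a b t := by
  have hint : Integrable (fun t => gpdf σ x t * wfun a b t) :=
    prod_integrable σ x hσ _ (wfun_continuous a b) (wfun_bdd a b)
  have hsplit1 : (∫ t in Set.Iic a, gpdf σ x t * wfun a b t)
      + (∫ t in Set.Ioi a, gpdf σ x t * wfun a b t) = ∫ t, gpdf σ x t * wfun a b t :=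
    intervalIntegral.integral_Iic_add_Ioi hint.integrableOn hint.integrableOn
  have hunion : Set.Ioc a b ∪ Set.Ioi b = Set.Ioi a := Set.Ioc_union_Ioi_eq_Ioi hab.le
  have hsplit2 : (∫ t in Set.Ioi a, gpdf σ x t * wfun a b t)
      = (∫ t in Set.Ioc a b, gpdf σ x t * wfun a b t)
        + (∫ t in Set.Ioi b, gpdf σ x t * wfun a b t) := by
    rw [← hunion]
    exact setIntegral_union (Set.Ioc_disjoint_Ioi le_rfl) measurableSet_Ioi
      hint.integrableOn hint.integrableOn
  have h0 : (∫ t in Set.Iic a, gpdf σ x t * wfun a b t) = 0 := by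
    rw [setIntegral_congr_fun measurableSet_Iic (g := fun _ => (0:ℝ)) ?_, integral_zero]
    intro t ht
    have : (t - a) / (b - a) ≤ 0 :=
      div_nonpos_of_nonpos_of_nonneg (by simp only [Set.mem_Iic] at ht; linarith) (by linarith)
    simp [wfun, max_eq_left this]
  have h1 : (∫ t in Set.Ioc a b, gpdf σ x t * wfun a b t)
      = ∫ t in a..b, gpdf σ x t * (t - a) / (b - a) := by
    rw [intervalIntegral.integral_of_le hab.le]
    refine setIntegral_congr_fun measurableSet_Ioc fun t ht => ?_
    have h01 : (0:ℝ) ≤ (t - a) / (b - a) := div_nonneg (by linarith [ht.1]) (by linarith)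
    have h11 : (t - a) / (b - a) ≤ 1 := by
      rw [div_le_one (by linarith)]; linarith [ht.2]
    rw [wfun, max_eq_right h01, min_eq_right h11, mul_div_assoc]
  have h2 : (∫ t in Set.Ioi b, gpdf σ x t * wfun a b t) = ∫ t in Set.Ici b, gpdf σ x t := by
    rw [integral_Ici_eq_integral_Ioi]
    refine setIntegral_congr_fun measurableSet_Ioi fun t ht => ?_
    have h11 : (1:ℝ) ≤ (t - a) / (b - a) := by
      rw [le_div_iff₀ (by linarith)]; simp only [Set.mem_Ioi] at ht; linarith
    rw [wfun, max_eq_right (by linarith), min_eq_left h11, mul_one]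
  rw [← hsplit1, hsplit2, h0, h1, h2]
  ring

/-- Representation of the bottom endpoint mass. -/
lemma repr_bot (σ x a b : ℝ) (hσ : 0 < σ) (hab : a < b) :
    (∫ t in Set.Iic a, gpdf σ x t) + (∫ t in a..b, gpdf σ x t * (b - t) / (b - a))
      = ∫ t, gpdf σ x t * vfun a b t := by
  have hint : Integrable (fun t => gpdf σ x t * vfun a b t) :=
    prod_integrable σ x hσ _ (vfun_continuous a b) (vfun_bdd a b)
  have hsplit1 : (∫ t in Set.Iic a, gpdf σ x t * vfun a b t)
      + (∫ t in Set.Ioi a, gpdf σ x t * vfun a b t) = ∫ t, gpdf σ x t * vfun a b t :=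
    intervalIntegral.integral_Iic_add_Ioi hint.integrableOn hint.integrableOn
  have hunion : Set.Ioc a b ∪ Set.Ioi b = Set.Ioi a := Set.Ioc_union_Ioi_eq_Ioi hab.le
  have hsplit2 : (∫ t in Set.Ioi a, gpdf σ x t * vfun a b t)
      = (∫ t in Set.Ioc a b, gpdf σ x t * vfun a b t)
        + (∫ t in Set.Ioi b, gpdf σ x t * vfun a b t) := by
    rw [← hunion]
    exact setIntegral_union (Set.Ioc_disjoint_Ioi le_rfl) measurableSet_Ioi
      hint.integrableOn hint.integrableOn
  have h0 : (∫ t in Set.Iic a, gpdf σ x t * vfun a b t) = ∫ t in Set.Iic a, gpdf σ x t := by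
    refine setIntegral_congr_fun measurableSet_Iic fun t ht => ?_
    have h11 : (1:ℝ) ≤ (b - t) / (b - a) := by
      rw [le_div_iff₀ (by linarith)]; simp only [Set.mem_Iic] at ht; linarith
    rw [vfun, max_eq_right (by linarith), min_eq_left h11, mul_one]
  have h1 : (∫ t in Set.Ioc a b, gpdf σ x t * vfun a b t)
      = ∫ t in a..b, gpdf σ x t * (b - t) / (b - a) := by
    rw [intervalIntegral.integral_of_le hab.le]
    refine setIntegral_congr_fun measurableSet_Ioc fun t ht => ?_
    have h01 : (0:ℝ) ≤ (b - t) / (b - a) := div_nonneg (by linarith [ht.2]) (by linarith)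
    have h11 : (b - t) / (b - a) ≤ 1 := by
      rw [div_le_one (by linarith)]; linarith [ht.1]
    rw [vfun, max_eq_right h01, min_eq_right h11, mul_div_assoc]
  have h2 : (∫ t in Set.Ioi b, gpdf σ x t * vfun a b t) = 0 := by
    rw [setIntegral_congr_fun measurableSet_Ioi (g := fun _ => (0:ℝ)) ?_, integral_zero]
    intro t ht
    simp only [Set.mem_Ioi] at ht
    have : (b - t) / (b - a) ≤ 0 :=
      div_nonpos_of_nonpos_of_nonneg (by linarith) (by linarith)
    simp [vfun, max_eq_left this]
  rw [← hsplit1, hsplit2, h0, h1, h2]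
  ring

/-- Monotonicity of the endpoint masses of the quantized Gaussian in the input:
`x ↦ P_x(k-1)` is nondecreasing and `x ↦ P_x(0)` is nonincreasing. -/
theorem quantGauss_endpoint_monotone (Cq σ : ℝ) (hC : 0 < Cq) (hσ : 0 < σ)
    (k : ℕ) (hk : 2 ≤ k) (x x' : ℝ) (hxx' : x ≤ x') :
    qgPmf Cq σ k x (k - 1) ≤ qgPmf Cq σ k x' (k - 1)
    ∧ qgPmf Cq σ k x 0 ≥ qgPmf Cq σ k x' 0 := by
  have hk1 : (1:ℝ) ≤ (k:ℝ) - 1 := by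
    have : (2:ℝ) ≤ (k:ℝ) := by exact_mod_cast hk
    linarith
  have hδ : 0 < 2 * Cq / ((k:ℝ) - 1) := by positivity
  set δ := 2 * Cq / ((k:ℝ) - 1) with hδdef
  have hne : k - 1 ≠ 0 := by omega
  have hB : ∀ r : ℕ, Blev Cq k r = -Cq + (r:ℝ) * δ := fun r => rfl
  -- top endpoint
  have hd1 : Blev Cq k (k-1) - Blev Cq k (k-2) = δ := by
    rw [hB, hB]
    have h1 : ((k - 1 : ℕ) : ℝ) = (k:ℝ) - 1 := by
      have := Nat.cast_sub (by omega : 1 ≤ k) (R := ℝ); simpa using this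
    have h2 : ((k - 2 : ℕ) : ℝ) = (k:ℝ) - 2 := by
      have := Nat.cast_sub hk (R := ℝ); simpa using this
    rw [h1, h2]; ring
  have hd0 : Blev Cq k 1 - Blev Cq k 0 = δ := by
    rw [hB, hB]; push_cast; ring
  have hab1 : Blev Cq k (k-2) < Blev Cq k (k-1) := by linarith
  have hab0 : Blev Cq k 0 < Blev Cq k 1 := by linarith
  constructor
  · -- k-1 case
    rw [qgPmf, qgPmf, if_neg hne, if_neg hne, if_pos rfl, if_pos rfl]
    have e1 := repr_top σ x (Blev Cq k (k-2)) (Blev Cq k (k-1)) hσ hab1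
    have e2 := repr_top σ x' (Blev Cq k (k-2)) (Blev Cq k (k-1)) hσ hab1
    rw [hd1] at e1 e2
    rw [e1, e2]
    exact mono_core σ hσ _ (wfun_continuous _ _) (wfun_bdd _ _) (wfun_mono _ _ hab1) x x' hxx'
  · -- 0 case
    rw [qgPmf, qgPmf, if_pos rfl, if_pos rfl]
    have e1 := repr_bot σ x (Blev Cq k 0) (Blev Cq k 1) hσ hab0
    have e2 := repr_bot σ x' (Blev Cq k 0) (Blev Cq k 1) hσ hab0
    rw [hd0] at e1 e2
    rw [ge_iff_le, e1, e2]
    exact anti_core σ hσ _ (vfun_continuous _ _) (vfun_bdd _ _) (vfun_anti _ _ hab0) x x' hxx'
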